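/- Fix an integer t ≥ 1, let R_t(r) = Σ_{i=0}^t r^i/i!, and for y ∈ (0,t) let r_0(y) be the unique positive solution of r·R_t'(r)/R_t(r) = y. Then as y → t from below, r_0(y) = t/(t−y) + O(1); that is, the quantity r_0(y) − t/(t−y) remains bounded as y ↑ t. -/

import Mathlib

open Filter Asymptotics Set

/-- `R_t(r) = Σ_{i=0}^t r^i / i!`. -/
noncomputable def Rt (t : ℕ) (r : ℝ) : ℝ :=
  ∑ i ∈ Finset.range (t + 1), r ^ i / (i.factorial : ℝ)

/-- `F_t(r) = r · R_t'(r) / R_t(r)`. -/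
noncomputable def Ft (t : ℕ) (r : ℝ) : ℝ := r * deriv (Rt t) r / Rt t r

-- D polynomial
noncomputable def Dp (t : ℕ) (r : ℝ) : ℝ :=
  ∑ i ∈ Finset.range (t + 1), ((t : ℝ) - i) * r ^ i / (i.factorial : ℝ)

noncomputable def Pp (t : ℕ) (r : ℝ) : ℝ :=
  ∑ i ∈ Finset.range (t + 1), ((i : ℝ) - 1) * ((t : ℝ) - i) * r ^ i / (i.factorial : ℝ)

lemma deriv_Rt (t : ℕ) (r : ℝ) :
    deriv (Rt t) r = ∑ i ∈ Finset.range t, r ^ i / (i.factorial : ℝ) := by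
  have h1 : HasDerivAt (Rt t)
      (∑ i ∈ Finset.range (t+1), (i : ℝ) * r ^ (i-1) / (i.factorial : ℝ)) r := by
    apply HasDerivAt.fun_sum
    intro i _
    exact (hasDerivAt_pow i r).div_const _
  have h : HasDerivAt (Rt t) (∑ i ∈ Finset.range t, r ^ i / (i.factorial : ℝ)) r := by
    convert h1 using 1
    rw [Finset.sum_range_succ' (fun i => (i : ℝ) * r ^ (i-1) / (i.factorial : ℝ)) t]
    simp only [Nat.cast_zero, zero_mul, Nat.factorial_zero, Nat.cast_one, zero_div, add_zero]
    apply Finset.sum_congr rfl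
    intro i _
    have hfac : ((i+1).factorial : ℝ) = (i+1) * i.factorial := by
      push_cast [Nat.factorial_succ]; ring
    rw [hfac]
    have hi : ((i:ℝ)+1) ≠ 0 := by positivity
    field_simp
    simp only [Nat.add_sub_cancel, Nat.add_sub_cancel_left]
    push_cast
    ring
  exact h.deriv

lemma Rt_pos (t : ℕ) {r : ℝ} (hr : 0 < r) : 0 < Rt t r := by
  apply Finset.sum_pos
  · intro i _
    positivity
  · exact ⟨0, Finset.mem_range.2 (Nat.succ_pos t)⟩

-- r * Rt t r reindexed
lemma mul_Rt (t : ℕ) (r : ℝ) :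
    r * Rt t r = ∑ i ∈ Finset.range (t + 2), (i : ℝ) * r ^ i / (i.factorial : ℝ) := by
  rw [Finset.sum_range_succ' (fun i => (i : ℝ) * r ^ i / (i.factorial : ℝ)) (t+1)]
  simp only [Nat.cast_zero, zero_mul, pow_zero, mul_one, Nat.factorial_zero, Nat.cast_one,
    zero_div, add_zero]
  rw [Rt, Finset.mul_sum]
  apply Finset.sum_congr rfl
  intro i _
  have hfac : ((i+1).factorial : ℝ) = (i+1) * i.factorial := by
    push_cast [Nat.factorial_succ]; ring
  rw [hfac]
  have hi : ((i:ℝ)+1) ≠ 0 := by positivity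
  push_cast
  field_simp
  ring

lemma mul_Dp (t : ℕ) (r : ℝ) :
    r * Dp t r = ∑ i ∈ Finset.range (t + 2),
      (i : ℝ) * ((t : ℝ) - i + 1) * r ^ i / (i.factorial : ℝ) := by
  rw [Finset.sum_range_succ' (fun i => (i : ℝ) * ((t : ℝ) - i + 1) * r ^ i / (i.factorial : ℝ)) (t+1)]
  simp only [Nat.cast_zero, zero_mul, pow_zero, Nat.factorial_zero, Nat.cast_one,
    zero_div, add_zero]
  rw [Dp, Finset.mul_sum]
  apply Finset.sum_congr rfl
  intro i _
  have hfac : ((i+1).factorial : ℝ) = (i+1) * i.factorial := by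
    push_cast [Nat.factorial_succ]; ring
  rw [hfac]
  have hi : ((i:ℝ)+1) ≠ 0 := by positivity
  push_cast
  field_simp
  ring

-- claim 1: (t - y) * S = D  when y S = r S - r^{t+1}/t!
lemma claim1 (t : ℕ) (r : ℝ) :
    (t : ℝ) * Rt t r - r * Rt t r + r ^ (t+1) / (t.factorial : ℝ) = Dp t r := by
  rw [mul_Rt, Finset.sum_range_succ]
  have hfac : ((t+1).factorial : ℝ) = (t+1) * t.factorial := by
    push_cast [Nat.factorial_succ]; ring
  have htf : (t.factorial : ℝ) ≠ 0 := by positivity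
  have h2 : ((t:ℝ)+1) * r ^ (t+1) / ((t+1).factorial : ℝ) = r ^ (t+1) / (t.factorial : ℝ) := by
    rw [hfac]; field_simp
  push_cast
  rw [h2]
  rw [Rt, Dp, Finset.mul_sum]
  rw [show ∀ A B c : ℝ, A - (B + c) + c = A - B from fun A B c => by ring]
  rw [← Finset.sum_sub_distrib]
  exact Finset.sum_congr rfl fun i _ => by ring

-- claim 3: r D - t S = P
lemma claim3 (t : ℕ) (r : ℝ) :
    r * Dp t r - (t : ℝ) * Rt t r = Pp t r := by
  rw [mul_Dp, Finset.sum_range_succ]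
  have h0 : ((t+1 : ℕ) : ℝ) * ((t : ℝ) - ((t+1:ℕ):ℝ) + 1) = 0 := by push_cast; ring
  rw [show (((t+1:ℕ):ℝ) * ((t:ℝ) - ((t+1:ℕ):ℝ) + 1) * r ^ (t+1) / (((t+1).factorial : ℝ))) = 0 by
    rw [h0]; simp]
  rw [add_zero, Rt, Pp, Finset.mul_sum, ← Finset.sum_sub_distrib]
  apply Finset.sum_congr rfl
  intro i _
  ring

lemma Dp_ge (t : ℕ) {r : ℝ} (hr : 0 ≤ r) : (t : ℝ) ≤ Dp t r := by
  have h0 : ((t : ℝ) - (0:ℕ)) * r ^ 0 / ((0:ℕ).factorial : ℝ) = t := by simp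
  calc (t : ℝ) = ((t : ℝ) - (0:ℕ)) * r ^ (0:ℕ) / ((0:ℕ).factorial : ℝ) := h0.symm
    _ ≤ Dp t r := by
        apply Finset.single_le_sum (f := fun i : ℕ => ((t : ℝ) - (i:ℝ)) * r ^ i / (i.factorial : ℝ))
        · intro i hi
          have : (i : ℝ) ≤ t := by
            exact_mod_cast Nat.lt_succ_iff.1 (Finset.mem_range.1 hi)
          have h1 : (0:ℝ) ≤ (t : ℝ) - i := by linarith
          positivity
        · exact Finset.mem_range.2 (Nat.succ_pos t)

lemma abs_Pp_le (t : ℕ) (ht : 1 ≤ t) {r : ℝ} (hr : 0 ≤ r) :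
    |Pp t r| ≤ (t : ℝ) * Dp t r := by
  rw [abs_le]
  constructor
  · have h : 0 ≤ (t : ℝ) * Dp t r + Pp t r := by
      rw [Pp, Dp, Finset.mul_sum, ← Finset.sum_add_distrib]
      apply Finset.sum_nonneg
      intro i hi
      have hile : (i : ℝ) ≤ t := by
        exact_mod_cast Nat.lt_succ_iff.1 (Finset.mem_range.1 hi)
      have ht1 : (1:ℝ) ≤ t := by exact_mod_cast ht
      have key : (0:ℝ) ≤ ((t:ℝ) - i) * ((t:ℝ) + i - 1) := by
        apply mul_nonneg <;> [linarith; linarith [Nat.cast_nonneg (α := ℝ) i]]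
      have : (t : ℝ) * (((t : ℝ) - i) * r ^ i / (i.factorial : ℝ))
          + ((i : ℝ) - 1) * ((t : ℝ) - i) * r ^ i / (i.factorial : ℝ)
          = ((t:ℝ) - i) * ((t:ℝ) + i - 1) * r ^ i / (i.factorial : ℝ) := by ring
      rw [this]
      positivity
    linarith
  · have h : 0 ≤ (t : ℝ) * Dp t r - Pp t r := by
      rw [Pp, Dp, Finset.mul_sum, ← Finset.sum_sub_distrib]
      apply Finset.sum_nonneg
      intro i hi
      have hile : (i : ℝ) ≤ t := by
        exact_mod_cast Nat.lt_succ_iff.1 (Finset.mem_range.1 hi)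
      have : (t : ℝ) * (((t : ℝ) - i) * r ^ i / (i.factorial : ℝ))
          - ((i : ℝ) - 1) * ((t : ℝ) - i) * r ^ i / (i.factorial : ℝ)
          = ((t:ℝ) - i) * ((t:ℝ) - i + 1) * r ^ i / (i.factorial : ℝ) := by ring
      rw [this]
      have h1 : (0:ℝ) ≤ (t:ℝ) - i := by linarith
      positivity
    linarith

theorem stmt6 (t : ℕ) (ht : 1 ≤ t) (r0 : ℝ → ℝ)
    (hr0 : ∀ y ∈ Set.Ioo (0 : ℝ) t, 0 < r0 y ∧ Ft t (r0 y) = y) :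
    (fun y : ℝ => r0 y - (t : ℝ) / ((t : ℝ) - y))
      =O[nhdsWithin (t : ℝ) (Set.Iio (t : ℝ))] (fun _ : ℝ => (1 : ℝ)) := by
  rw [isBigO_iff]
  refine ⟨t, ?_⟩
  have hmem : Set.Ioo (0:ℝ) t ∈ nhdsWithin (t : ℝ) (Set.Iio (t : ℝ)) := by
    apply Ioo_mem_nhdsLT_of_mem
    constructor
    · exact_mod_cast Nat.lt_of_lt_of_le Nat.zero_lt_one (by exact_mod_cast ht)
    · exact le_refl _
  filter_upwards [hmem] with y hy
  obtain ⟨hrpos, hFt⟩ := hr0 y hy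
  set r := r0 y with hr
  have hS : 0 < Rt t r := Rt_pos t hrpos
  have hSne : Rt t r ≠ 0 := ne_of_gt hS
  -- y * S = r * S - r^{t+1}/t!
  have hys : y * Rt t r = r * Rt t r - r ^ (t+1) / (t.factorial : ℝ) := by
    have h1 : r * deriv (Rt t) r = y * Rt t r := by
      rw [Ft] at hFt
      field_simp at hFt
      linarith [hFt]
    rw [deriv_Rt] at h1
    have h2 : Rt t r = (∑ i ∈ Finset.range t, r ^ i / (i.factorial : ℝ)) + r ^ t / (t.factorial : ℝ) := by
      rw [Rt, Finset.sum_range_succ]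
    have : r * (Rt t r - r ^ t / (t.factorial : ℝ)) = y * Rt t r := by
      rw [← h1, h2]; ring
    rw [mul_sub] at this
    have hrt : r * (r ^ t / (t.factorial : ℝ)) = r ^ (t+1) / (t.factorial : ℝ) := by
      rw [pow_succ]; ring
    linarith [this, hrt]
  -- t - y = D / S
  have hty : ((t:ℝ) - y) * Rt t r = Dp t r := by
    have := claim1 t r
    nlinarith [hys, this]
  have hD : (0:ℝ) < Dp t r := lt_of_lt_of_le (by exact_mod_cast Nat.lt_of_lt_of_le Nat.zero_lt_one ht) (Dp_ge t hrpos.le)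
  have hDne : Dp t r ≠ 0 := ne_of_gt hD
  have htysub : (t:ℝ) - y = Dp t r / Rt t r := by
    field_simp
    linarith [hty]
  -- t / (t - y) = t S / D
  have hdiv : (t:ℝ) / ((t:ℝ) - y) = (t:ℝ) * Rt t r / Dp t r := by
    rw [htysub]
    field_simp
  have key : r - (t:ℝ) / ((t:ℝ) - y) = Pp t r / Dp t r := by
    rw [hdiv, eq_div_iff hDne, sub_mul, div_mul_cancel₀ _ hDne]
    exact claim3 t r
  calc ‖r0 y - (t : ℝ) / ((t : ℝ) - y)‖ = |Pp t r / Dp t r| := by rw [← hr, key]; rfl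
    _ ≤ (t:ℝ) := by
        rw [abs_div, abs_of_pos hD, div_le_iff₀ hD]
        calc |Pp t r| ≤ (t:ℝ) * Dp t r := abs_Pp_le t ht hrpos.le
          _ = (t:ℝ) * Dp t r := rfl
    _ = (t:ℝ) * ‖(1:ℝ)‖ := by simp
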